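/- With the shifting construction f', measures μ, μ' as above, and any coordinate i ≠ 1: E_{μ'}[f' | x_i = 1] = E_μ[f | x_i = 1] and E_{μ'}[f' | x_i = -1] = E_μ[f | x_i = -1]. Moreover E_{μ'}[f' | x_1 = -1] = E_μ[f | x_1 = -1]. -/
import Mathlib


open Finset

noncomputable section

/-- The ±1 value of a Boolean coordinate. -/
def sgn (b : Bool) : ℝ := if b then 1 else -1

/-- Weight of a point of the cube `{-1,1}^r` under the product measure with
`P(x_i = 1) = p i`. -/
def wt {r : ℕ} (p : Fin r → ℝ) (x : Fin r → Bool) : ℝ :=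
  ∏ i, if x i then p i else 1 - p i

/-- Expectation of `f` under the product measure `μ_p`. -/
def Ex {r : ℕ} (p : Fin r → ℝ) (f : (Fin r → Bool) → ℝ) : ℝ :=
  ∑ x : Fin r → Bool, wt p x * f x

/-- Conditional expectation `E_{μ_p}[f | x_i = b]`. -/
def condEx {r : ℕ} (p : Fin r → ℝ) (f : (Fin r → Bool) → ℝ) (i : Fin r) (b : Bool) : ℝ :=
  (∑ x : Fin r → Bool, if x i = b then wt p x * f x else 0) / (if b then p i else 1 - p i)

/-- The uniform product measure (each `p i = 1/2`). -/
def half (r : ℕ) : Fin r → ℝ := fun _ => 1 / 2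

/-- `S x = Σ_i x_i` with coordinates interpreted as ±1. -/
def S {r : ℕ} (x : Fin r → Bool) : ℝ := ∑ i, sgn (x i)

/-- `x^1`: flip the first coordinate. -/
def flip1 {r : ℕ} (x : Fin (r+1) → Bool) : Fin (r+1) → Bool :=
  Function.update x 0 (!(x 0))


def rest {r : ℕ} (p : Fin (r+1) → ℝ) (x : Fin (r+1) → Bool) : ℝ :=
  ∏ i : Fin r, if x i.succ then p i.succ else 1 - p i.succ

lemma wt_eq {r : ℕ} (p : Fin (r+1) → ℝ) (x : Fin (r+1) → Bool) :
    wt p x = (if x 0 then p 0 else 1 - p 0) * rest p x := by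
  rw [wt, Fin.prod_univ_succ]; rfl

lemma rest_update {r : ℕ} (p : Fin (r+1) → ℝ) (x : Fin (r+1) → Bool) (b : Bool) :
    rest p (Function.update x 0 b) = rest p x := by
  unfold rest
  exact Finset.prod_congr rfl fun i _ => by
    rw [Function.update_of_ne (Fin.succ_ne_zero i)]

lemma rest_update_p {r : ℕ} (p : Fin (r+1) → ℝ) (c : ℝ) (x : Fin (r+1) → Bool) :
    rest (Function.update p 0 c) x = rest p x := by
  unfold rest
  exact Finset.prod_congr rfl fun i _ => by
    rw [Function.update_of_ne (Fin.succ_ne_zero i)]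

lemma flip1_zero {r : ℕ} (x : Fin (r+1) → Bool) : flip1 x 0 = !(x 0) :=
  Function.update_self _ _ _

lemma flip1_flip1 {r : ℕ} : Function.Involutive (flip1 (r := r)) := by
  intro x
  unfold flip1
  rw [Function.update_self, Function.update_idem, Bool.not_not, Function.update_eq_self]

lemma rest_flip1 {r : ℕ} (p : Fin (r+1) → ℝ) (x : Fin (r+1) → Bool) :
    rest p (flip1 x) = rest p x := rest_update p x _

lemma key {r : ℕ} (p : Fin (r+1) → ℝ) (g g' : (Fin (r+1) → Bool) → ℝ)
    (hg' : ∀ x, g' x = if x 0 then 2 * p 0 * g x + (1 - 2 * p 0) * g (flip1 x) else g x) :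
    ∑ x : Fin (r+1) → Bool, wt (Function.update p 0 (1/2)) x * g' x
      = ∑ x : Fin (r+1) → Bool, wt p x * g x := by
  have hq0 : Function.update p 0 (1/2 : ℝ) 0 = 1/2 := Function.update_self _ _ _
  have hbij : Function.Bijective (flip1 (r := r)) := flip1_flip1.bijective
  calc ∑ x : Fin (r+1) → Bool, wt (Function.update p 0 (1/2)) x * g' x
      = ∑ x : Fin (r+1) → Bool,
          ((if x 0 then p 0 * (rest p x * g x) else (1/2) * (rest p x * g x))
           + (if x 0 then (1/2 - p 0) * (rest p x * g (flip1 x)) else 0)) := by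
        refine Finset.sum_congr rfl fun x _ => ?_
        rw [hg', wt_eq, rest_update_p, hq0]
        cases h : x 0 <;> simp [h] <;> ring
    _ = (∑ x : Fin (r+1) → Bool,
          (if x 0 then p 0 * (rest p x * g x) else (1/2) * (rest p x * g x)))
        + ∑ x : Fin (r+1) → Bool,
          (if x 0 then (1/2 - p 0) * (rest p x * g (flip1 x)) else 0) :=
        Finset.sum_add_distrib
    _ = (∑ x : Fin (r+1) → Bool,
          (if x 0 then p 0 * (rest p x * g x) else (1/2) * (rest p x * g x)))
        + ∑ x : Fin (r+1) → Bool,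
          (if x 0 then 0 else (1/2 - p 0) * (rest p x * g x)) := by
        congr 1
        refine (Fintype.sum_bijective (flip1 (r := r)) hbij _ _ fun x => ?_).symm
        rw [flip1_zero, rest_flip1, flip1_flip1 x]
        cases h : x 0 <;> simp
    _ = ∑ x : Fin (r+1) → Bool, wt p x * g x := by
        rw [← Finset.sum_add_distrib]
        refine Finset.sum_congr rfl fun x _ => ?_
        rw [wt_eq]
        cases h : x 0 <;> simp [h] <;> ring

/-- shifting preserves the conditional expectations at coordinates
i ≠ 1 (both values) and at the first coordinate given x₁ = -1. -/
theorem stmt4 {r : ℕ} (p : Fin (r+1) → ℝ) (hp : ∀ i, 0 ≤ p i ∧ p i ≤ 1)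
    (hp1 : p 0 ≤ 1 / 2)
    (f f' : (Fin (r+1) → Bool) → ℝ)
    (hf : ∀ x, f x ∈ Set.Icc (-1 : ℝ) 1)
    (hf' : ∀ x, f' x =
      if x 0 then 2 * p 0 * f x + (1 - 2 * p 0) * f (flip1 x) else f x) :
    (∀ i : Fin (r+1), i ≠ 0 →
      condEx (Function.update p 0 (1/2)) f' i true = condEx p f i true ∧
      condEx (Function.update p 0 (1/2)) f' i false = condEx p f i false) ∧
    condEx (Function.update p 0 (1/2)) f' 0 false = condEx p f 0 false := by
  have hq0 : Function.update p 0 (1/2 : ℝ) 0 = 1/2 := Function.update_self _ _ _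
  constructor
  · intro i hi
    have hqi : Function.update p 0 (1/2 : ℝ) i = p i := Function.update_of_ne hi _ _
    have hflipi : ∀ x : Fin (r+1) → Bool, flip1 x i = x i := fun x =>
      Function.update_of_ne hi _ _
    have main : ∀ b : Bool,
        (∑ x : Fin (r+1) → Bool,
          if x i = b then wt (Function.update p 0 (1/2)) x * f' x else 0)
        = ∑ x : Fin (r+1) → Bool, if x i = b then wt p x * f x else 0 := by
      intro b
      have h1 : (∑ x : Fin (r+1) → Bool,
          if x i = b then wt (Function.update p 0 (1/2)) x * f' x else 0)
          = ∑ x : Fin (r+1) → Bool,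
            wt (Function.update p 0 (1/2)) x * (if x i = b then f' x else 0) := by
        refine Finset.sum_congr rfl fun x _ => ?_
        split <;> simp
      have h2 : (∑ x : Fin (r+1) → Bool, if x i = b then wt p x * f x else 0)
          = ∑ x : Fin (r+1) → Bool, wt p x * (if x i = b then f x else 0) := by
        refine Finset.sum_congr rfl fun x _ => ?_
        split <;> simp
      rw [h1, h2]
      refine key p (fun x => if x i = b then f x else 0)
        (fun x => if x i = b then f' x else 0) fun x => ?_
      simp only [hf', hflipi]
      cases h : x 0 <;> cases h2 : x i == b <;> simp_all [beq_iff_eq] <;> ring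
    constructor
    · simp only [condEx, hqi, main true]
    · simp only [condEx, hqi, main false]
  · have hp0 : (1 : ℝ) - p 0 ≠ 0 := by
      have := hp1; intro h; nlinarith
    simp only [condEx, hq0, if_neg (Bool.false_ne_true ∘ id)]
    have h1 : (∑ x : Fin (r+1) → Bool,
        if x 0 = false then wt (Function.update p 0 (1/2)) x * f' x else 0)
        = (1/2) * ∑ x : Fin (r+1) → Bool,
            (if x 0 = false then rest p x * f x else 0) := by
      rw [Finset.mul_sum]
      refine Finset.sum_congr rfl fun x _ => ?_
      by_cases h : x 0 = false
      · rw [if_pos h, if_pos h, hf', h, wt_eq, rest_update_p, hq0, h]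
        simp; ring
      · rw [if_neg h, if_neg h, mul_zero]
    have h2 : (∑ x : Fin (r+1) → Bool, if x 0 = false then wt p x * f x else 0)
        = (1 - p 0) * ∑ x : Fin (r+1) → Bool,
            (if x 0 = false then rest p x * f x else 0) := by
      rw [Finset.mul_sum]
      refine Finset.sum_congr rfl fun x _ => ?_
      by_cases h : x 0 = false
      · rw [if_pos h, if_pos h, wt_eq, h]
        simp; ring
      · rw [if_neg h, if_neg h, mul_zero]
    rw [h1, h2]
    rw [show (1:ℝ) - 1/2 = 1/2 by norm_num,
      mul_div_cancel_left₀ _ (by norm_num : (1:ℝ)/2 ≠ 0), mul_div_cancel_left₀ _ hp0]
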